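/- The function g : (0,1) → ℝ defined by g(x) = φ(t_x), where t_x is the unique real with Φ^c(t_x) = x, is strictly concave on (0,1); explicitly, for all reals t₁ ≠ t₂ and all λ ∈ (0,1), if t is the unique real with Φ^c(t) = λ·Φ^c(t₁) + (1 − λ)·Φ^c(t₂), then φ(t) > λ·φ(t₁) + (1 − λ)·φ(t₂). -/

import Mathlib

open MeasureTheory Set

/-- Standard normal density. -/
noncomputable def phi (t : ℝ) : ℝ := Real.exp (-t ^ 2 / 2) / Real.sqrt (2 * Real.pi)

/-- Standard normal CDF. -/
noncomputable def Phi (t : ℝ) : ℝ := ∫ u in Set.Iic t, phi u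

/-- Standard normal complementary CDF. -/
noncomputable def Phic (t : ℝ) : ℝ := 1 - Phi t

lemma phi_pos (t : ℝ) : 0 < phi t := by
  unfold phi
  positivity

lemma phi_continuous : Continuous phi := by
  unfold phi
  fun_prop

lemma phi_integrable : Integrable phi := by
  have h : Integrable (fun x : ℝ => Real.exp (-(1/2 : ℝ) * x ^ 2)) :=
    integrable_exp_neg_mul_sq (by norm_num)
  have : phi = fun x : ℝ => Real.exp (-(1/2 : ℝ) * x ^ 2) / Real.sqrt (2 * Real.pi) := by
    funext x; unfold phi; ring_nf
  rw [this]
  exact h.div_const _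

lemma hasDerivAt_phi (t : ℝ) : HasDerivAt phi (-t * phi t) t := by
  have h1 : HasDerivAt (fun x : ℝ => -x ^ 2 / 2) (-t) t := by
    have := ((hasDerivAt_pow 2 t).neg).div_const 2
    refine this.congr_deriv ?_
    simp; ring
  have h2 := (h1.exp).div_const (Real.sqrt (2 * Real.pi))
  refine h2.congr_deriv ?_
  unfold phi; ring

lemma hasDerivAt_Phi (t : ℝ) : HasDerivAt Phi (phi t) t := by
  have hint : ∀ a b : ℝ, IntervalIntegrable phi volume a b :=
    fun a b => phi_integrable.intervalIntegrable
  have key : ∀ x : ℝ, Phi x = Phi 0 + ∫ u in (0:ℝ)..x, phi u := by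
    intro x
    have := intervalIntegral.integral_Iic_sub_Iic (μ := volume) (f := phi) (a := (0:ℝ)) (b := x)
      (phi_integrable.integrableOn) (phi_integrable.integrableOn)
    unfold Phi
    linarith [this]
  have hd : HasDerivAt (fun x => Phi 0 + ∫ u in (0:ℝ)..x, phi u) (phi t) t := by
    have := intervalIntegral.integral_hasDerivAt_right (f := phi) (a := (0:ℝ)) (b := t)
      (hint 0 t) (phi_continuous.stronglyMeasurableAtFilter _ _) phi_continuous.continuousAt
    exact this.const_add (Phi 0)
  exact hd.congr_of_eventuallyEq (Filter.Eventually.of_forall key)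

lemma Phi_strictMono : StrictMono Phi := by
  intro a b hab
  have h : Phi b - Phi a = ∫ u in a..b, phi u := by
    have := intervalIntegral.integral_Iic_sub_Iic (μ := volume) (f := phi) (a := a) (b := b)
      (phi_integrable.integrableOn) (phi_integrable.integrableOn)
    unfold Phi; linarith [this]
  have hpos : 0 < ∫ u in a..b, phi u :=
    intervalIntegral.intervalIntegral_pos_of_pos (phi_integrable.intervalIntegrable)
      (fun u => phi_pos u) hab
  linarith

lemma Phic_strictAnti : StrictAnti Phic := by
  intro a b hab
  have := Phi_strictMono hab
  unfold Phic; linarith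

lemma hasDerivAt_Phic (t : ℝ) : HasDerivAt Phic (-phi t) t := by
  have := (hasDerivAt_Phi t).const_sub (1:ℝ)
  exact this

/-- Cauchy MVT consequence: for `a < b`, there is `c ∈ (a,b)` with
`phi b - phi a = c * (Phic b - Phic a)`. -/
lemma exists_mean (a b : ℝ) (hab : a < b) :
    ∃ c ∈ Ioo a b, phi b - phi a = c * (Phic b - Phic a) := by
  obtain ⟨c, hc, heq⟩ := exists_ratio_hasDerivAt_eq_ratio_slope
    phi (fun x => -x * phi x) hab
    (phi_continuous.continuousOn)
    (fun x _ => hasDerivAt_phi x)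
    Phic (fun x => -phi x)
    ((continuous_const.sub (continuous_iff_continuousAt.2
        (fun x => (hasDerivAt_Phi x).continuousAt))).continuousOn)
    (fun x _ => hasDerivAt_Phic x)
  refine ⟨c, hc, ?_⟩
  have hphic : phi c ≠ 0 := ne_of_gt (phi_pos c)
  -- heq : (Phic b - Phic a) * (-c * phi c) = (phi b - phi a) * (-phi c)
  field_simp at heq
  nlinarith [heq, phi_pos c]

theorem main_aux (t₁ t₂ t lam : ℝ) (h12 : t₁ < t₂) (hlam : lam ∈ Set.Ioo (0 : ℝ) 1)
    (ht : Phic t = lam * Phic t₁ + (1 - lam) * Phic t₂) :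
    lam * phi t₁ + (1 - lam) * phi t₂ < phi t := by
  obtain ⟨hl0, hl1⟩ := hlam
  have hP : Phic t₂ < Phic t₁ := Phic_strictAnti h12
  have hPt1 : Phic t < Phic t₁ := by nlinarith
  have hPt2 : Phic t₂ < Phic t := by nlinarith
  have h1t : t₁ < t := by
    by_contra h
    push_neg at h
    rcases eq_or_lt_of_le h with h | h
    · rw [h] at hPt1; linarith
    · have := Phic_strictAnti h; linarith
  have ht2 : t < t₂ := by
    by_contra h
    push_neg at h
    rcases eq_or_lt_of_le h with h | h
    · rw [← h] at hPt2; linarith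
    · have := Phic_strictAnti h; linarith
  obtain ⟨c₂, hc₂, he₂⟩ := exists_mean t₁ t h1t
  obtain ⟨c₁, hc₁, he₁⟩ := exists_mean t t₂ ht2
  have hcc : c₂ < c₁ := lt_trans hc₂.2 hc₁.1
  -- Phic t - Phic t₁ = -(1-lam)*(Phic t₁ - Phic t₂), Phic t₂ - Phic t = -lam*(Phic t₁ - Phic t₂)
  have e1 : Phic t - Phic t₁ = -(1 - lam) * (Phic t₁ - Phic t₂) := by linarith [ht]; 
  have e2 : Phic t₂ - Phic t = -lam * (Phic t₁ - Phic t₂) := by linarith [ht]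
  have d : 0 < Phic t₁ - Phic t₂ := by linarith
  have f1 : phi t - phi t₁ = c₂ * (-(1 - lam) * (Phic t₁ - Phic t₂)) := by
    rw [← e1]; exact he₂
  have f2 : phi t₂ - phi t = c₁ * (-lam * (Phic t₁ - Phic t₂)) := by
    rw [← e2]; exact he₁
  have key : 0 < lam * (1 - lam) * (Phic t₁ - Phic t₂) * (c₁ - c₂) :=
    mul_pos (mul_pos (mul_pos hl0 (by linarith)) d) (by linarith)
  have heq : phi t - (lam * phi t₁ + (1 - lam) * phi t₂)
      = lam * (1 - lam) * (Phic t₁ - Phic t₂) * (c₁ - c₂) := by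
    linear_combination lam * f1 - (1 - lam) * f2
  linarith

/-- The function `x ↦ φ((Φᶜ)⁻¹(x))` is strictly concave on `(0,1)`: for all
`t₁ ≠ t₂`, `λ ∈ (0,1)` and `t` with `Φᶜ(t) = λ Φᶜ(t₁) + (1-λ) Φᶜ(t₂)`, one has
`φ(t) > λ φ(t₁) + (1-λ) φ(t₂)`. -/
theorem phi_of_quantile_strictConcave
    (t₁ t₂ t lam : ℝ) (hne : t₁ ≠ t₂) (hlam : lam ∈ Set.Ioo (0 : ℝ) 1)
    (ht : Phic t = lam * Phic t₁ + (1 - lam) * Phic t₂) :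
    lam * phi t₁ + (1 - lam) * phi t₂ < phi t := by
  rcases lt_or_gt_of_ne hne with h | h
  · exact main_aux t₁ t₂ t lam h hlam ht
  · have := main_aux t₂ t₁ t (1 - lam) h
      ⟨by linarith [hlam.2], by linarith [hlam.1]⟩ (by linarith [ht] ; )
    linarith [this]
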